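/- Let I = C ⊕ [−Δ, Δ] ⊆ ℝ^{l×p} be an interval matrix and M = ⟨M_C; G₁,…,G_g⟩ ⊆ ℝ^{p×q} a matrix zonotope. Define F = Δ(|M_C| + Σⱼ|Gⱼ|) ∈ ℝ^{l×q} and let F^{(1)},…,F^{(lq)} be the entrywise decomposition of F. Then the exact set product IM = {NP | N ∈ I, P ∈ M} is contained in the matrix zonotope T_I(M) = ⟨C M_C; C G₁,…,C G_g, F^{(1)},…,F^{(lq)}⟩. -/

import Mathlib

/-- Elementwise set product of two sets of real matrices. -/
def mprod {p q r : ℕ} (A : Set (Matrix (Fin p) (Fin q) ℝ))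
    (B : Set (Matrix (Fin q) (Fin r) ℝ)) : Set (Matrix (Fin p) (Fin r) ℝ) :=
  {x | ∃ a ∈ A, ∃ b ∈ B, x = a * b}

/-- Interval matrix C ⊕ [−Δ, Δ]. -/
def intv {p q : ℕ} (C Δ : Matrix (Fin p) (Fin q) ℝ) : Set (Matrix (Fin p) (Fin q) ℝ) :=
  {M | ∀ i j, |M i j - C i j| ≤ Δ i j}

/-- Entrywise absolute value of a matrix. -/
def aent {p q : ℕ} (M : Matrix (Fin p) (Fin q) ℝ) : Matrix (Fin p) (Fin q) ℝ :=
  Matrix.of fun i j => |M i j|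

/-- Matrix zonotope ⟨C; G⟩ = {C + Σᵢ βᵢ Gᵢ | |βᵢ| ≤ 1}. -/
def zono {p q : ℕ} {ι : Type*} [Fintype ι] (C : Matrix (Fin p) (Fin q) ℝ)
    (G : ι → Matrix (Fin p) (Fin q) ℝ) : Set (Matrix (Fin p) (Fin q) ℝ) :=
  {M | ∃ β : ι → ℝ, (∀ i, |β i| ≤ 1) ∧ M = C + ∑ i, β i • G i}

/-- Entrywise decomposition: `edec M k` keeps the entry of `M` at position `k`. -/
def edec {l q : ℕ} (M : Matrix (Fin l) (Fin q) ℝ) (k : Fin l × Fin q) :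
    Matrix (Fin l) (Fin q) ℝ :=
  Matrix.of fun i j => if (i, j) = k then M i j else 0

/-- IM ⊆ T_I(M): the exact set product of an interval matrix and a matrix zonotope
is contained in the matrix zonotope
⟨C M_C; C G₁,…,C G_g, F^{(1)},…,F^{(lq)}⟩ with F = Δ(|M_C| + Σⱼ|Gⱼ|). -/
theorem stmt9 {l p q g : ℕ} (C Δ : Matrix (Fin l) (Fin p) ℝ)
    (Mc : Matrix (Fin p) (Fin q) ℝ) (G : Fin g → Matrix (Fin p) (Fin q) ℝ)
    (hΔ : ∀ i j, 0 ≤ Δ i j) :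
    mprod (intv C Δ) (zono Mc G) ⊆
      zono (C * Mc)
        (Sum.elim (fun i : Fin g => C * G i)
          (fun k : Fin l × Fin q => edec (Δ * (aent Mc + ∑ j, aent (G j))) k)) := by
  rintro X ⟨N, hN, P, ⟨β, hβ, rfl⟩, rfl⟩
  set F := Δ * (aent Mc + ∑ j, aent (G j)) with hFdef
  set D := N - C with hD
  set P := Mc + ∑ t, β t • G t with hP
  have hFnn : ∀ i j, 0 ≤ F i j := by
    intro i j
    rw [hFdef, Matrix.mul_apply]
    apply Finset.sum_nonneg
    intro m _
    apply mul_nonneg (hΔ i m)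
    have : 0 ≤ |Mc m j| + ∑ t, |G t m j| := by positivity
    simpa [aent, Matrix.add_apply, Matrix.sum_apply] using this
  have hbound : ∀ i j, |(D * P) i j| ≤ F i j := by
    intro i j
    calc |(D * P) i j| = |∑ m, D i m * P m j| := by rw [Matrix.mul_apply]
      _ ≤ ∑ m, |D i m * P m j| := Finset.abs_sum_le_sum_abs _ _
      _ ≤ ∑ m, Δ i m * (|Mc m j| + ∑ t, |G t m j|) := by
          apply Finset.sum_le_sum
          intro m _
          rw [abs_mul]
          apply mul_le_mul (hN i m) ?_ (abs_nonneg _) (hΔ i m)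
          calc |P m j| = |Mc m j + ∑ t, β t * G t m j| := by
                simp [hP, Matrix.add_apply, Matrix.sum_apply]
            _ ≤ |Mc m j| + |∑ t, β t * G t m j| := abs_add_le _ _
            _ ≤ |Mc m j| + ∑ t, |β t * G t m j| := by
                gcongr; exact Finset.abs_sum_le_sum_abs _ _
            _ ≤ |Mc m j| + ∑ t, |G t m j| := by
                refine add_le_add_right (Finset.sum_le_sum fun t _ => ?_) _
                rw [abs_mul]
                exact mul_le_of_le_one_left (abs_nonneg _) (hβ t)
      _ = F i j := by
          rw [hFdef, Matrix.mul_apply]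
          congr 1; ext m
          simp [aent, Matrix.add_apply, Matrix.sum_apply]
  refine ⟨Sum.elim β (fun k => if F k.1 k.2 = 0 then 0 else (D * P) k.1 k.2 / F k.1 k.2),
    ?_, ?_⟩
  · rintro (t | k)
    · exact hβ t
    · simp only [Sum.elim_inr]
      split_ifs with h
      · simp
      · rw [abs_div, abs_of_nonneg (hFnn _ _),
          div_le_one (lt_of_le_of_ne (hFnn _ _) (Ne.symm h))]
        exact hbound _ _
  · have key : ∑ k : Fin l × Fin q,
        (if F k.1 k.2 = 0 then 0 else (D * P) k.1 k.2 / F k.1 k.2) • edec F k = D * P := by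
      ext i j
      rw [Matrix.sum_apply]
      rw [Finset.sum_eq_single (i, j)]
      · simp only [edec, Matrix.smul_apply, Matrix.of_apply, if_pos rfl, smul_eq_mul]
        split_ifs with h
        · have := hbound i j
          rw [h] at this
          have : (D * P) i j = 0 := abs_nonpos_iff.mp this
          simp [this]
        · field_simp
      · intro k _ hk
        simp [edec, Matrix.smul_apply, (by simpa using hk.symm : ¬ (i, j) = k)]
      · intro h; exact absurd (Finset.mem_univ _) h
    rw [Fintype.sum_sum_type]
    simp only [Sum.elim_inl, Sum.elim_inr]
    rw [key]
    have : N = C + D := by rw [hD]; abel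
    rw [this, Matrix.add_mul, hP, Matrix.mul_add, Matrix.mul_sum]
    simp only [Matrix.mul_smul]
    abel
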